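/- Let H = (V,E) be a proper Eulerian hypergraph with incidence matrix M_inc, let M be a V×V matrix over ZMod 2, and let ᾱ and ᾱ' be Pauli-based magic assignments of H (with k and l qubits respectively) both respecting M, i.e., for all u,v ∈ V, ᾱ(u)ᾱ(v) = (−1)^{M_{u,v}}·ᾱ(v)ᾱ(u) and ᾱ'(u)ᾱ'(v) = (−1)^{M_{u,v}}·ᾱ'(v)ᾱ'(u). Then c(ᾱ) + c(ᾱ') ∈ row(M_inc), and consequently b_{ᾱ}(H) = b_{ᾱ'}(H): Pauli-based magic assignments respecting the same Gram matrix have the same noncontextual bound. -/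

import Mathlib

open Matrix Finset

/-! ### Pauli matrices and observables -/

/-- The Pauli `X` matrix. -/
noncomputable def PX : Matrix (Fin 2) (Fin 2) ℂ := !![0, 1; 1, 0]

/-- The Pauli `Y` matrix. -/
noncomputable def PY : Matrix (Fin 2) (Fin 2) ℂ := !![0, -Complex.I; Complex.I, 0]

/-- The Pauli `Z` matrix. -/
noncomputable def PZ : Matrix (Fin 2) (Fin 2) ℂ := !![1, 0; 0, -1]

/-- The Kronecker (tensor) product of `k` 2×2 matrices, realized as a matrix indexed by
`Fin k → Fin 2` (a type of cardinality `2^k`). -/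
noncomputable def pauliTensor (k : ℕ) (P : Fin k → Matrix (Fin 2) (Fin 2) ℂ) :
    Matrix (Fin k → Fin 2) (Fin k → Fin 2) ℂ :=
  Matrix.of fun f g => ∏ i, P i (f i) (g i)

/-- A `k`-qubit Pauli observable: `ε · (P₁ ⊗ ⋯ ⊗ P_k)` with `ε ∈ {1,-1}` and each
`P_i ∈ {I, X, Y, Z}`. -/
def IsPauliObservable {k : ℕ} (A : Matrix (Fin k → Fin 2) (Fin k → Fin 2) ℂ) : Prop :=
  ∃ (ε : ℂ) (P : Fin k → Matrix (Fin 2) (Fin 2) ℂ),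
    (ε = 1 ∨ ε = -1) ∧ (∀ i, P i = 1 ∨ P i = PX ∨ P i = PY ∨ P i = PZ) ∧
    A = ε • pauliTensor k P

/-! ### Hypergraphs -/

/-- Product of the observables assigned to the vertices of a hyperedge (taken in increasing
order of the vertices; for commuting observables this is the product in any order). -/
noncomputable def edgeProd {V n : Type*} [LinearOrder V] [Fintype n] [DecidableEq n]
    (α : V → Matrix n n ℂ) (e : Finset V) : Matrix n n ℂ :=
  ((e.sort (· ≤ ·)).map α).prod

/-- A proper Eulerian hypergraph: each vertex lies in an even number of hyperedges, there are
no isolated vertices, no empty hyperedges, and all hyperedges are distinct. -/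
def ProperEulerian {V E : Type*} [DecidableEq V] [Fintype E] (edge : E → Finset V) : Prop :=
  (∀ v : V, Even (Finset.univ.filter (fun e : E => v ∈ edge e)).card) ∧
  (∀ v : V, ∃ e : E, v ∈ edge e) ∧
  (∀ e : E, (edge e).Nonempty) ∧
  Function.Injective edge

/-- A valid Gram matrix for a hypergraph. -/
def IsValidGram {V E : Type*} (edge : E → Finset V) (M : Matrix V V (ZMod 2)) : Prop :=
  M.IsSymm ∧ (∀ v, M v v = 0) ∧
  (∀ e : E, ∀ u ∈ edge e, ∀ v ∈ edge e, M u v = 0) ∧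
  (∀ e : E, ∀ v : V, ∑ u ∈ edge e, M u v = 0)

/-- The concatenated list of vertices of the hyperedges, each hyperedge's vertices listed in
increasing order, hyperedges enumerated by the list `le`. -/
def vertexList {V E : Type*} [LinearOrder V] (edge : E → Finset V) (le : List E) : List V :=
  (le.map fun e => (edge e).sort (· ≤ ·)).flatten

/-- The inversion sum `s(M) = ∑_{i<j, L_i > L_j} M_{L_i, L_j}`. -/
def inversionSum {V : Type*} [LinearOrder V] (M : Matrix V V (ZMod 2)) (L : List V) : ZMod 2 :=
  ∑ i : Fin L.length, ∑ j : Fin L.length,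
    if i < j ∧ L.get j < L.get i then M (L.get i) (L.get j) else 0

/-- A magic Gram matrix: a valid Gram matrix with inversion sum 1. -/
def MagicGram {V E : Type*} [LinearOrder V] (edge : E → Finset V) (le : List E)
    (M : Matrix V V (ZMod 2)) : Prop :=
  IsValidGram edge M ∧ inversionSum M (vertexList edge le) = 1

/-- A `k`-qubit Pauli-based magic assignment of a hypergraph. -/
def IsPauliMagicAssignment {V E : Type*} [LinearOrder V] [Fintype E] (k : ℕ)
    (edge : E → Finset V) (α : V → Matrix (Fin k → Fin 2) (Fin k → Fin 2) ℂ) : Prop :=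
  (∀ v, IsPauliObservable (α v)) ∧
  (∀ e : E, ∀ u ∈ edge e, ∀ w ∈ edge e, Commute (α u) (α w)) ∧
  (∀ e : E, edgeProd α (edge e) = 1 ∨ edgeProd α (edge e) = -1) ∧
  Odd (Nat.card {e : E // edgeProd α (edge e) = -1})

/-- A magic assignment of a hypergraph by Hermitian matrices squaring to the identity. -/
def IsMagicAssignment {V E n : Type*} [LinearOrder V] [Fintype E] [Fintype n] [DecidableEq n]
    (edge : E → Finset V) (α : V → Matrix n n ℂ) : Prop :=
  (∀ v, (α v).IsHermitian) ∧ (∀ v, α v * α v = 1) ∧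
  (∀ e : E, ∀ u ∈ edge e, ∀ w ∈ edge e, Commute (α u) (α w)) ∧
  (∀ e : E, edgeProd α (edge e) = 1 ∨ edgeProd α (edge e) = -1) ∧
  Odd (Nat.card {e : E // edgeProd α (edge e) = -1})

open scoped Classical in
/-- The sign vector `c(α) ∈ (ZMod 2)^E` of an assignment: `0` on hyperedges with product `+I`,
`1` on the others. -/
noncomputable def cvec {V E n : Type*} [LinearOrder V] [Fintype E] [Fintype n] [DecidableEq n]
    (edge : E → Finset V) (α : V → Matrix n n ℂ) : E → ZMod 2 :=
  fun e => if edgeProd α (edge e) = 1 then 0 else 1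

/-- The incidence matrix of a hypergraph. -/
def incMatrix {V E : Type*} [DecidableEq V] (edge : E → Finset V) : Matrix V E (ZMod 2) :=
  Matrix.of fun v e => if v ∈ edge e then 1 else 0

/-- Hamming weight of a vector over `ZMod 2`. -/
def hWeight {E : Type*} [Fintype E] (y : E → ZMod 2) : ℕ :=
  (Finset.univ.filter fun e => y e ≠ 0).card

/-- The symplectic product on `(ZMod 2)^{2k}` (coordinates indexed by `Fin k ⊕ Fin k`). -/
def sympl (k : ℕ) (s t : Fin k ⊕ Fin k → ZMod 2) : ZMod 2 :=
  ∑ i : Fin k, (s (Sum.inl i) * t (Sum.inr i) + s (Sum.inr i) * t (Sum.inl i))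

set_option maxHeartbeats 1000000

/-! ### Auxiliary lemmas -/

lemma pauliTensor_mul (k : ℕ) (P Q : Fin k → Matrix (Fin 2) (Fin 2) ℂ) :
    pauliTensor k P * pauliTensor k Q = pauliTensor k (fun i => P i * Q i) := by
  ext f g
  simp only [pauliTensor, Matrix.mul_apply, Matrix.of_apply]
  calc ∑ h : Fin k → Fin 2, (∏ i, P i (f i) (h i)) * ∏ i, Q i (h i) (g i)
      = ∑ h : Fin k → Fin 2, ∏ i, P i (f i) (h i) * Q i (h i) (g i) := by
        simp_rw [Finset.prod_mul_distrib]
    _ = ∏ i, ∑ t : Fin 2, P i (f i) t * Q i t (g i) :=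
        (Fintype.prod_sum (fun i t => P i (f i) t * Q i t (g i))).symm
    _ = ∏ i, (P i * Q i) (f i) (g i) := by simp [Matrix.mul_apply]

lemma pauliTensor_one (k : ℕ) : pauliTensor k (fun _ => (1 : Matrix (Fin 2) (Fin 2) ℂ)) = 1 := by
  ext f g
  simp only [pauliTensor, Matrix.of_apply]
  by_cases h : f = g
  · subst h; simp [Matrix.one_apply]
  · obtain ⟨i, hi⟩ := Function.ne_iff.mp h
    rw [Matrix.one_apply_ne h]
    exact Finset.prod_eq_zero (Finset.mem_univ i) (Matrix.one_apply_ne hi)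

lemma pauli_sq (A : Matrix (Fin 2) (Fin 2) ℂ) (h : A = 1 ∨ A = PX ∨ A = PY ∨ A = PZ) :
    A * A = 1 := by
  rcases h with rfl | rfl | rfl | rfl
  · simp
  all_goals
    simp only [PX, PY, PZ, Matrix.mul_fin_two, Matrix.one_fin_two]
    norm_num [Complex.I_mul_I]

lemma obs_sq {k : ℕ} (A : Matrix (Fin k → Fin 2) (Fin k → Fin 2) ℂ)
    (h : IsPauliObservable A) : A * A = 1 := by
  obtain ⟨ε, P, hε, hP, rfl⟩ := h
  rw [smul_mul_smul_comm, pauliTensor_mul]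
  have h1 : (fun i => P i * P i) = fun _ => (1 : Matrix (Fin 2) (Fin 2) ℂ) :=
    funext fun i => pauli_sq _ (hP i)
  rw [h1, pauliTensor_one]
  rcases hε with rfl | rfl <;> norm_num

noncomputable def sgnL (M : Matrix V V (ZMod 2)) (a : V) (P : List V) : ℂ :=
  (P.map fun b => ((-1 : ℂ) ^ (M a b).val)).prod

lemma sgnL_pm (M : Matrix V V (ZMod 2)) (a : V) : ∀ P : List V,
    sgnL M a P = 1 ∨ sgnL M a P = -1
  | [] => Or.inl (by simp [sgnL])
  | b :: P => by
    have h := sgnL_pm M a P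
    have hb : ((-1 : ℂ) ^ (M a b).val) = 1 ∨ ((-1 : ℂ) ^ (M a b).val) = -1 := by
      rcases Nat.even_or_odd (M a b).val with h' | h'
      · exact Or.inl h'.neg_one_pow
      · exact Or.inr h'.neg_one_pow
    simp only [sgnL, List.map_cons, List.prod_cons] at *
    rcases hb with hb | hb <;> rcases h with h | h <;> rw [hb, h] <;> norm_num

lemma pull_lemma {n : Type*} [Fintype n] [DecidableEq n]
    (M : Matrix V V (ZMod 2)) (α : V → Matrix n n ℂ)
    (hc : ∀ u v : V, α u * α v = ((-1 : ℂ) ^ (M u v).val) • (α v * α u)) (a : V) :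
    ∀ P : List V, α a * (P.map α).prod = sgnL M a P • ((P.map α).prod * α a)
  | [] => by simp [sgnL]
  | b :: P => by
    simp only [List.map_cons, List.prod_cons, sgnL]
    calc α a * (α b * (P.map α).prod) = (α a * α b) * (P.map α).prod := by
          rw [mul_assoc]
      _ = (((-1 : ℂ) ^ (M a b).val) • (α b * α a)) * (P.map α).prod := by rw [hc a b]
      _ = ((-1 : ℂ) ^ (M a b).val) • (α b * (α a * (P.map α).prod)) := by
          rw [smul_mul_assoc, mul_assoc]
      _ = ((-1 : ℂ) ^ (M a b).val) • (α b * (sgnL M a P • ((P.map α).prod * α a))) := by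
          rw [pull_lemma M α hc a P]
      _ = (((-1 : ℂ) ^ (M a b).val) * sgnL M a P) • (α b * (P.map α).prod * α a) := by
          rw [mul_smul_comm, smul_smul, mul_assoc]
  
lemma key_calc {n : Type*} [Fintype n] [DecidableEq n]
    (M : Matrix V V (ZMod 2)) (α : V → Matrix n n ℂ)
    (hc : ∀ u v : V, α u * α v = ((-1 : ℂ) ^ (M u v).val) • (α v * α u))
    (hsq : ∀ v, α v * α v = 1) (a : V) (P Q : List V) (c : ℂ)
    (h : ((P ++ Q).map α).prod = c • 1) :
    (((a :: (P ++ a :: Q)).map α).prod) = (sgnL M a P * c) • 1 := by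
  have expand : (((a :: (P ++ a :: Q)).map α).prod)
      = α a * ((P.map α).prod * (α a * (Q.map α).prod)) := by
    simp [List.map_append, List.prod_append]
  rw [expand, ← mul_assoc, pull_lemma M α hc a P, smul_mul_assoc, mul_assoc,
    ← mul_assoc (α a), hsq a, one_mul, ← List.prod_append, ← List.map_append, h, smul_smul]

section Chi
variable {R : Type*} [CommMonoid R] [HasDistribNeg R]

lemma npow_parity {m n : ℕ} (h : m % 2 = n % 2) : (-1 : R) ^ m = (-1) ^ n := by
  rcases Nat.even_or_odd m with hm | hm
  · rw [hm.neg_one_pow, (Nat.even_iff.mpr (by rw [← h]; exact Nat.even_iff.mp hm)).neg_one_pow]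
  · rw [hm.neg_one_pow, (Nat.odd_iff.mpr (by rw [← h]; exact Nat.odd_iff.mp hm)).neg_one_pow]

lemma chi_add (s t : ZMod 2) :
    (-1 : R) ^ ((s + t).val) = (-1) ^ s.val * (-1) ^ t.val := by
  rw [← pow_add]
  exact npow_parity (by revert s t; decide)

lemma chi_sum {ι : Type*} (S : Finset ι) (f : ι → ZMod 2) :
    (-1 : R) ^ ((∑ e ∈ S, f e).val) = ∏ e ∈ S, (-1 : R) ^ ((f e).val) := by
  induction S using Finset.cons_induction with
  | empty => simp
  | cons a s ha ih => rw [Finset.sum_cons, Finset.prod_cons, chi_add, ih]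

lemma chi_mul_self (t : ZMod 2) : (-1 : R) ^ t.val * (-1) ^ t.val = 1 := by
  rw [← pow_add]
  exact (Nat.even_iff.mpr (by revert t; decide)).neg_one_pow

end Chi

lemma chiC_inj {s t : ZMod 2} (h : (-1 : ℂ) ^ s.val = (-1) ^ t.val) : s = t := by
  by_contra hne
  have hv : s.val % 2 ≠ t.val % 2 := by
    have : ∀ s t : ZMod 2, s ≠ t → s.val % 2 ≠ t.val % 2 := by decide
    exact this s t hne
  rcases Nat.even_or_odd s.val with hs | hs <;> rcases Nat.even_or_odd t.val with ht | ht
  · exact hv (by rw [Nat.even_iff.mp hs, Nat.even_iff.mp ht])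
  · rw [hs.neg_one_pow, ht.neg_one_pow] at h; norm_num at h
  · rw [hs.neg_one_pow, ht.neg_one_pow] at h; norm_num at h
  · exact hv (by rw [Nat.odd_iff.mp hs, Nat.odd_iff.mp ht])

lemma lemC {V : Type*} [DecidableEq V] {n n' : Type*} [Fintype n] [DecidableEq n]
    [Fintype n'] [DecidableEq n'] (M : Matrix V V (ZMod 2))
    (α : V → Matrix n n ℂ) (α' : V → Matrix n' n' ℂ)
    (hc : ∀ u v : V, α u * α v = ((-1 : ℂ) ^ (M u v).val) • (α v * α u))
    (hc' : ∀ u v : V, α' u * α' v = ((-1 : ℂ) ^ (M u v).val) • (α' v * α' u))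
    (hsq : ∀ v, α v * α v = 1) (hsq' : ∀ v, α' v * α' v = 1) :
    ∀ (N : ℕ) (L : List V), L.length ≤ N → (∀ v, Even (L.count v)) →
      ∃ c : ℂ, (c = 1 ∨ c = -1) ∧ (L.map α).prod = c • 1 ∧ (L.map α').prod = c • 1 := by
  intro N
  induction N with
  | zero =>
    intro L hL _
    obtain rfl : L = [] := List.eq_nil_of_length_eq_zero (Nat.le_zero.mp hL)
    exact ⟨1, Or.inl rfl, by simp, by simp⟩
  | succ N ih =>
    intro L hL hev
    rcases L with _ | ⟨a, L'⟩
    · exact ⟨1, Or.inl rfl, by simp, by simp⟩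
    · have hcount := hev a
      rw [List.count_cons_self] at hcount
      have hodd : ¬ Even (L'.count a) := by
        intro h
        exact (Nat.even_add_one.mp hcount) h
      have ha : a ∈ L' := by
        rw [← List.count_pos_iff]
        rcases Nat.eq_zero_or_pos (L'.count a) with h | h
        · exact absurd (h ▸ Even.zero) hodd
        · exact h
      obtain ⟨P, Q, rfl⟩ := List.append_of_mem ha
      have hlen : (P ++ Q).length ≤ N := by
        simp only [List.length_cons, List.length_append] at hL ⊢
        omega
      have hev' : ∀ v, Even ((P ++ Q).count v) := by
        intro v
        have h := hev v
        by_cases hv : v = a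
        · subst hv
          rw [List.count_cons_self, List.count_append, List.count_cons_self] at h
          rw [List.count_append]
          obtain ⟨m, hm⟩ := h
          exact ⟨m - 1, by omega⟩
        · rw [List.count_cons_of_ne (Ne.symm hv), List.count_append, List.count_cons_of_ne (Ne.symm hv)] at h
          rw [List.count_append]
          exact h
      obtain ⟨c, hcpm, h1, h2⟩ := ih (P ++ Q) hlen hev'
      refine ⟨sgnL M a P * c, ?_, key_calc M α hc hsq a P Q c h1,
        key_calc M α' hc' hsq' a P Q c h2⟩
      rcases sgnL_pm M a P with h | h <;> rcases hcpm with h' | h' <;>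
        rw [h, h'] <;> norm_num

lemma matrix_one_ne_neg_one {n : Type*} [Fintype n] [DecidableEq n] [Nonempty n] :
    (-1 : Matrix n n ℂ) ≠ 1 := by
  intro h
  obtain ⟨d⟩ := ‹Nonempty n›
  have := congrFun (congrFun h d) d
  simp only [Matrix.neg_apply, Matrix.one_apply_eq] at this
  norm_num at this

lemma smul_one_inj {n : Type*} [Fintype n] [DecidableEq n] [Nonempty n] {c d : ℂ}
    (h : c • (1 : Matrix n n ℂ) = d • 1) : c = d := by
  obtain ⟨x⟩ := ‹Nonempty n›
  have := congrFun (congrFun h x) x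
  simpa [Matrix.smul_apply, Matrix.one_apply_eq] using this

lemma edgeProd_eq_chi {V E n : Type*} [LinearOrder V] [Fintype E] [Fintype n] [DecidableEq n]
    [Nonempty n] (edge : E → Finset V) (α : V → Matrix n n ℂ)
    (hpm : ∀ e : E, edgeProd α (edge e) = 1 ∨ edgeProd α (edge e) = -1) (e : E) :
    edgeProd α (edge e) = ((-1 : ℂ) ^ ((cvec edge α e).val)) • 1 := by
  rcases hpm e with h | h
  · rw [h, cvec, if_pos h]
    norm_num
  · have hne : edgeProd α (edge e) ≠ 1 := by rw [h]; exact matrix_one_ne_neg_one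
    rw [h, cvec, if_neg hne]
    norm_num [ZMod.val_one]

lemma list_prod_chi {V E n : Type*} [LinearOrder V] [Fintype E] [Fintype n] [DecidableEq n]
    [Nonempty n] (edge : E → Finset V) (α : V → Matrix n n ℂ)
    (hpm : ∀ e : E, edgeProd α (edge e) = 1 ∨ edgeProd α (edge e) = -1) :
    ∀ ls : List E, ((ls.map fun e => edgeProd α (edge e)).prod)
      = ((-1 : ℂ) ^ (((ls.map (cvec edge α)).sum).val)) • 1
  | [] => by simp
  | e :: ls => by
    rw [List.map_cons, List.prod_cons, list_prod_chi edge α hpm ls,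
      edgeProd_eq_chi edge α hpm e, smul_mul_smul_comm, one_mul, List.map_cons,
      List.sum_cons, chi_add]

lemma flatten_prod_eq {V E n : Type*} [LinearOrder V] [Fintype E] [Fintype n] [DecidableEq n]
    [Nonempty n] (edge : E → Finset V) (α : V → Matrix n n ℂ)
    (hpm : ∀ e : E, edgeProd α (edge e) = 1 ∨ edgeProd α (edge e) = -1) (S : Finset E) :
    (((S.toList.map fun e => (edge e).sort (· ≤ ·)).flatten).map α).prod
      = ((-1 : ℂ) ^ ((∑ e ∈ S, cvec edge α e).val)) • 1 := by
  rw [List.map_flatten, List.map_map, List.prod_flatten, List.map_map]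
  have h1 : (List.prod ∘ List.map α ∘ fun e => (edge e).sort (· ≤ ·))
      = fun e => edgeProd α (edge e) := rfl
  rw [h1, list_prod_chi edge α hpm, Finset.sum_map_toList]

lemma cvec_mem_rowspace {V E : Type*} [Fintype V] [LinearOrder V] [Fintype E]
    {n n' : Type*} [Fintype n] [DecidableEq n] [Nonempty n]
    [Fintype n'] [DecidableEq n'] [Nonempty n']
    (edge : E → Finset V) (M : Matrix V V (ZMod 2))
    (α : V → Matrix n n ℂ) (α' : V → Matrix n' n' ℂ)
    (hpm : ∀ e : E, edgeProd α (edge e) = 1 ∨ edgeProd α (edge e) = -1)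
    (hpm' : ∀ e : E, edgeProd α' (edge e) = 1 ∨ edgeProd α' (edge e) = -1)
    (hsq : ∀ v, α v * α v = 1) (hsq' : ∀ v, α' v * α' v = 1)
    (hc : ∀ u v : V, α u * α v = ((-1 : ℂ) ^ (M u v).val) • (α v * α u))
    (hc' : ∀ u v : V, α' u * α' v = ((-1 : ℂ) ^ (M u v).val) • (α' v * α' u)) :
    ∃ x : V → ZMod 2, cvec edge α + cvec edge α' = Matrix.vecMul x (incMatrix edge) := by
  classical
  set B : LinearMap.BilinForm (ZMod 2) (E → ZMod 2) :=
    Matrix.toBilin' (1 : Matrix E E (ZMod 2)) with hBdef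
  have hBapp : ∀ x y : E → ZMod 2, B x y = ∑ e, x e * y e := by
    intro x y
    rw [hBdef, Matrix.toBilin'_apply']
    simp [dotProduct, Matrix.one_mulVec]
  have hnd : B.Nondegenerate :=
    Matrix.Nondegenerate.toBilin' (Matrix.nondegenerate_iff_det_ne_zero.mpr (by simp))
  have hrefl : B.IsRefl := by
    intro x y h
    rw [hBapp] at h ⊢
    rw [← h]
    exact Finset.sum_congr rfl fun e _ => mul_comm _ _
  set T : (V → ZMod 2) →ₗ[ZMod 2] (E → ZMod 2) :=
    Matrix.mulVecLin (incMatrix edge)ᵀ with hTdef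
  have hT : ∀ x, T x = Matrix.vecMul x (incMatrix edge) := by
    intro x
    rw [hTdef, Matrix.mulVecLin_apply, Matrix.mulVec_transpose]
  suffices h : cvec edge α + cvec edge α' ∈ LinearMap.range T by
    obtain ⟨x, hx⟩ := h
    exact ⟨x, by rw [← hx, hT]⟩
  rw [← LinearMap.BilinForm.orthogonal_orthogonal hnd hrefl (LinearMap.range T),
    LinearMap.BilinForm.mem_orthogonal_iff]
  intro z hz
  have hrow : ∀ v : V, ∑ e, (if v ∈ edge e then (1 : ZMod 2) else 0) * z e = 0 := by
    intro v
    have hv : B (T (Pi.single v 1)) z = 0 :=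
      hz (T (Pi.single v 1)) (LinearMap.mem_range_self T _)
    have hTv : T (Pi.single v (1 : ZMod 2)) = fun e => if v ∈ edge e then 1 else 0 := by
      funext e
      rw [hT]
      simp [Matrix.vecMul, dotProduct, incMatrix, Pi.single_apply, ite_mul,
        one_mul, zero_mul]
    rw [hTv, hBapp] at hv
    exact hv
  set S : Finset E := Finset.univ.filter (fun e => z e = 1) with hSdef
  have hzvals : ∀ w : ZMod 2, w = 0 ∨ w = 1 := by decide
  have hzS : ∀ e, z e = if e ∈ S then 1 else 0 := by
    intro e
    by_cases h : z e = 1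
    · simp [hSdef, h]
    · rcases hzvals (z e) with h0 | h1
      · simp [hSdef, h, h0]
      · exact absurd h1 h
  have heven : ∀ v : V, Even ((S.filter fun e => v ∈ edge e).card) := by
    intro v
    have h := hrow v
    have hcast : (((S.filter fun e => v ∈ edge e).card : ℕ) : ZMod 2) = 0 := by
      rw [← h]
      have hterm : ∀ e : E, (if v ∈ edge e then (1 : ZMod 2) else 0) * z e
          = if e ∈ S.filter (fun e => v ∈ edge e) then 1 else 0 := by
        intro e
        rw [hzS e]
        by_cases h1 : v ∈ edge e <;> by_cases h2 : e ∈ S <;>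
          simp [Finset.mem_filter, h1, h2]
      rw [Finset.sum_congr rfl fun e _ => hterm e, ← Finset.sum_filter,
        Finset.filter_univ_mem, Finset.sum_const, nsmul_eq_mul, mul_one]
    obtain ⟨m, hm⟩ := (ZMod.natCast_eq_zero_iff _ 2).mp hcast
    exact ⟨m, by omega⟩
  set L : List V := (S.toList.map fun e => (edge e).sort (· ≤ ·)).flatten with hLdef
  have hLcount : ∀ v, L.count v = (S.filter fun e => v ∈ edge e).card := by
    intro v
    rw [hLdef, List.count_flatten, List.map_map]
    have hterm : ∀ e : E, (List.count v ∘ fun e => (edge e).sort (· ≤ ·)) e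
        = if v ∈ edge e then 1 else 0 := by
      intro e
      simp only [Function.comp_apply]
      by_cases hv : v ∈ edge e
      · rw [if_pos hv]
        exact List.count_eq_one_of_mem (Finset.sort_nodup _ _) ((Finset.mem_sort _).mpr hv)
      · rw [if_neg hv]
        exact List.count_eq_zero_of_not_mem (fun hmem => hv ((Finset.mem_sort _).mp hmem))
    rw [show (List.count v ∘ fun e : E => (edge e).sort (· ≤ ·))
        = fun e => if v ∈ edge e then 1 else 0 from funext hterm]
    rw [Finset.sum_map_toList, Finset.card_filter]
  have hLeven : ∀ v, Even (L.count v) := fun v => (hLcount v) ▸ heven v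
  obtain ⟨c, hcpm, h1, h2⟩ := lemC M α α' hc hc' hsq hsq' L.length L le_rfl hLeven
  have e1 : ((-1 : ℂ) ^ ((∑ e ∈ S, cvec edge α e).val)) = c :=
    smul_one_inj ((flatten_prod_eq edge α hpm S).symm.trans h1)
  have e2 : ((-1 : ℂ) ^ ((∑ e ∈ S, cvec edge α' e).val)) = c :=
    smul_one_inj ((flatten_prod_eq edge α' hpm' S).symm.trans h2)
  have hsum_eq : (∑ e ∈ S, cvec edge α e) = ∑ e ∈ S, cvec edge α' e :=
    chiC_inj (e1.trans e2.symm)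
  show B z (cvec edge α + cvec edge α') = 0
  rw [hBapp]
  calc ∑ e, z e * (cvec edge α + cvec edge α') e
      = ∑ e, (if e ∈ S then (cvec edge α e + cvec edge α' e) else 0) := by
        refine Finset.sum_congr rfl fun e _ => ?_
        rw [hzS e, Pi.add_apply]
        split_ifs <;> simp
    _ = ∑ e ∈ S, (cvec edge α e + cvec edge α' e) := by
        rw [← Finset.sum_filter, Finset.filter_univ_mem]
    _ = 0 := by
        rw [Finset.sum_add_distrib, hsum_eq]
        exact CharTwo.add_self_eq_zero _

lemma set_subset_aux {V E : Type*} [Fintype V] [LinearOrder V] [Fintype E]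
    (edge : E → Finset V) (c c' : E → ZMod 2) (x : V → ZMod 2)
    (hx : c + c' = Matrix.vecMul x (incMatrix edge)) :
    {q : ℤ | ∃ a : V → ℤ, (∀ v, a v = 1 ∨ a v = -1) ∧
      q = ∑ e : E, (-1 : ℤ) ^ (c e).val * ∏ v ∈ edge e, a v}
    ⊆ {q : ℤ | ∃ a : V → ℤ, (∀ v, a v = 1 ∨ a v = -1) ∧
      q = ∑ e : E, (-1 : ℤ) ^ (c' e).val * ∏ v ∈ edge e, a v} := by
  classical
  rintro q ⟨a, ha, rfl⟩
  refine ⟨fun v => (-1) ^ ((x v).val) * a v, fun v => ?_, ?_⟩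
  · show (-1 : ℤ) ^ ((x v).val) * a v = 1 ∨ (-1 : ℤ) ^ ((x v).val) * a v = -1
    rcases ha v with h | h <;> rcases Nat.even_or_odd (x v).val with hp | hp <;>
      rw [h, hp.neg_one_pow] <;> norm_num
  · refine Finset.sum_congr rfl fun e _ => ?_
    rw [Finset.prod_mul_distrib]
    have h2 : (∑ v ∈ edge e, x v) = c e + c' e := by
      have h3 := congrFun hx e
      rw [Pi.add_apply] at h3
      rw [h3]
      show _ = Matrix.vecMul x (incMatrix edge) e
      simp only [Matrix.vecMul, dotProduct, incMatrix, Matrix.of_apply, mul_ite,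
        mul_one, mul_zero]
      rw [← Finset.sum_filter, Finset.filter_univ_mem]
    rw [← chi_sum (R := ℤ), h2, chi_add]
    have hw : (-1 : ℤ) ^ ((c' e).val) * (-1) ^ ((c' e).val) = 1 := chi_mul_self _
    have : (-1 : ℤ) ^ (c' e).val * (((-1) ^ (c e).val * (-1) ^ (c' e).val) * ∏ v ∈ edge e, a v)
        = ((-1 : ℤ) ^ (c' e).val * (-1) ^ (c' e).val) * ((-1) ^ (c e).val * ∏ v ∈ edge e, a v) := by
      ring
    rw [this, hw, one_mul]

/-- Two Pauli-based magic assignments of a proper Eulerian hypergraph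
respecting the same Gram matrix `M` have sign vectors summing to an element of the row space of
the incidence matrix, and hence the same noncontextual bound. -/
theorem stmt18 {V E : Type*} [Fintype V] [LinearOrder V] [Fintype E]
    (edge : E → Finset V) (hH : ProperEulerian edge)
    (k l : ℕ) (M : Matrix V V (ZMod 2))
    (α : V → Matrix (Fin k → Fin 2) (Fin k → Fin 2) ℂ)
    (α' : V → Matrix (Fin l → Fin 2) (Fin l → Fin 2) ℂ)
    (hα : IsPauliMagicAssignment k edge α) (hα' : IsPauliMagicAssignment l edge α')
    (hc : ∀ u v : V, α u * α v = ((-1 : ℂ) ^ (M u v).val) • (α v * α u))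
    (hc' : ∀ u v : V, α' u * α' v = ((-1 : ℂ) ^ (M u v).val) • (α' v * α' u)) :
    (∃ x : V → ZMod 2,
        cvec edge α + cvec edge α' = Matrix.vecMul x (incMatrix edge)) ∧
    ∀ b b' : ℤ,
      IsGreatest {x : ℤ | ∃ a : V → ℤ, (∀ v, a v = 1 ∨ a v = -1) ∧
        x = ∑ e : E, (-1 : ℤ) ^ (cvec edge α e).val * ∏ v ∈ edge e, a v} b →
      IsGreatest {x : ℤ | ∃ a : V → ℤ, (∀ v, a v = 1 ∨ a v = -1) ∧
        x = ∑ e : E, (-1 : ℤ) ^ (cvec edge α' e).val * ∏ v ∈ edge e, a v} b' →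
      b = b' := by
  classical
  obtain ⟨hobs, hcomm, hpm, hodd⟩ := hα
  obtain ⟨hobs', hcomm', hpm', hodd'⟩ := hα'
  have hsq : ∀ v, α v * α v = 1 := fun v => obs_sq _ (hobs v)
  have hsq' : ∀ v, α' v * α' v = 1 := fun v => obs_sq _ (hobs' v)
  haveI : Nonempty (Fin k → Fin 2) := ⟨fun _ => 0⟩
  haveI : Nonempty (Fin l → Fin 2) := ⟨fun _ => 0⟩
  obtain ⟨x, hx⟩ := cvec_mem_rowspace edge M α α' hpm hpm' hsq hsq' hc hc'
  refine ⟨⟨x, hx⟩, ?_⟩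
  intro b b' hb hb'
  have hx2 : cvec edge α' + cvec edge α = Matrix.vecMul x (incMatrix edge) := by
    rw [add_comm]; exact hx
  have hset : {q : ℤ | ∃ a : V → ℤ, (∀ v, a v = 1 ∨ a v = -1) ∧
        q = ∑ e : E, (-1 : ℤ) ^ (cvec edge α e).val * ∏ v ∈ edge e, a v}
      = {q : ℤ | ∃ a : V → ℤ, (∀ v, a v = 1 ∨ a v = -1) ∧
        q = ∑ e : E, (-1 : ℤ) ^ (cvec edge α' e).val * ∏ v ∈ edge e, a v} :=
    Set.Subset.antisymm (set_subset_aux edge (cvec edge α) (cvec edge α') x hx)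
      (set_subset_aux edge (cvec edge α') (cvec edge α) x hx2)
  rw [hset] at hb
  exact hb.unique hb'
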